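/- For the linearized elastic system, the Lopatinskii–Shapiro condition holds at y = 0: for any λ ∈ ℂ with Re(λ) > 0, every solution γ ∈ C⁴([0,∞), ℂ²) of λγ + c⁻⁴ ∂_x⁴γ = 0 on [0,∞) (c = |∂_x γ₀| > 0 constant) with γ(0)_2 = 0, ∂_x²γ(0) = 0, ⟨∂_x³γ(0), ν₀⟩ν₀ having vanishing first component where (ν₀)_1 ≠ 0, and |γ(x)| → 0 as x → ∞, is identically zero. -/

import Mathlib

open Filter

noncomputable section

open Complex Set Matrix

/-- a decaying exponential times a constant tends to zero. -/
lemma exp_decay_aux (μ : ℂ) (hμ : μ.re < 0) (A : ℂ) :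
    Tendsto (fun x : ℝ => A * Complex.exp (μ * x)) atTop (nhds 0) := by
  rw [tendsto_zero_iff_norm_tendsto_zero]
  have hnorm : (fun x : ℝ => ‖A * Complex.exp (μ * x)‖)
      = fun x : ℝ => ‖A‖ * Real.exp (μ.re * x) := by
    funext x
    rw [norm_mul, Complex.norm_exp]
    congr 2
    simp [Complex.mul_re]
  rw [hnorm]
  have h1 : Tendsto (fun x : ℝ => μ.re * x) atTop atBot :=
    tendsto_id.const_mul_atTop_of_neg hμ
  have h2 : Tendsto (fun x : ℝ => Real.exp (μ.re * x)) atTop (nhds 0) :=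
    Real.tendsto_exp_atBot.comp h1
  simpa using h2.const_mul ‖A‖

/-- if a combination of two growing exponentials decays, the coefficients vanish. -/
lemma decay_two (r s A B : ℂ) (hr : 0 < r.re) (hs : 0 < s.re) (hrs : r ≠ s)
    (h : Tendsto (fun x : ℝ => A * Complex.exp (r * x) + B * Complex.exp (s * x))
      atTop (nhds 0)) : A = 0 ∧ B = 0 := by
  set g : ℝ → ℂ := fun x => A * Complex.exp (r * x) + B * Complex.exp (s * x) with hg
  have key : ∀ μ : ℂ, 0 < μ.re →
      Tendsto (fun x : ℝ => Complex.exp (-μ * x) * g x) atTop (nhds 0) := by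
    intro μ hμ
    rw [tendsto_zero_iff_norm_tendsto_zero]
    have hb : ∀ x : ℝ, 0 ≤ x → ‖Complex.exp (-μ * x) * g x‖ ≤ ‖g x‖ := by
      intro x hx
      rw [norm_mul]
      have : ‖Complex.exp (-μ * (x:ℂ))‖ ≤ 1 := by
        rw [Complex.norm_exp]
        have : (-μ * (x:ℂ)).re = -(μ.re * x) := by simp [Complex.mul_re]
        rw [this]
        exact Real.exp_le_one_iff.mpr (by nlinarith)
      calc ‖Complex.exp (-μ * (x:ℂ))‖ * ‖g x‖ ≤ 1 * ‖g x‖ :=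
            mul_le_mul_of_nonneg_right this (norm_nonneg _)
        _ = ‖g x‖ := one_mul _
    have hgn : Tendsto (fun x => ‖g x‖) atTop (nhds 0) :=
      tendsto_zero_iff_norm_tendsto_zero.mp h
    refine squeeze_zero' ?_ ?_ hgn
    · filter_upwards with x using norm_nonneg _
    · filter_upwards [eventually_ge_atTop (0:ℝ)] with x hx using hb x hx
  have hexpand : ∀ (μ ν C D : ℂ) (x : ℝ),
      Complex.exp (-μ * x) * (C * Complex.exp (μ * x) + D * Complex.exp (ν * x))
        = C + D * Complex.exp ((ν - μ) * x) := by
    intro μ ν C D x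
    have e1 : Complex.exp (-μ * (x:ℂ)) * Complex.exp (μ * x) = 1 := by
      rw [← Complex.exp_add]
      norm_num
    have e2 : Complex.exp (-μ * (x:ℂ)) * Complex.exp (ν * x)
        = Complex.exp ((ν - μ) * x) := by
      rw [← Complex.exp_add]
      ring_nf
    calc Complex.exp (-μ * (x:ℂ)) * (C * Complex.exp (μ * x) + D * Complex.exp (ν * x))
        = C * (Complex.exp (-μ * (x:ℂ)) * Complex.exp (μ * x))
          + D * (Complex.exp (-μ * (x:ℂ)) * Complex.exp (ν * x)) := by ring
      _ = C + D * Complex.exp ((ν - μ) * x) := by rw [e1, e2]; ring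
  have h1 : Tendsto (fun x : ℝ => A + B * Complex.exp ((s - r) * x)) atTop (nhds 0) := by
    have := key r hr
    simpa only [hg, hexpand] using this
  have h2 : Tendsto (fun x : ℝ => B + A * Complex.exp ((r - s) * x)) atTop (nhds 0) := by
    have := key s hs
    have hcomm : (fun x : ℝ => Complex.exp (-s * x) * g x)
        = fun x : ℝ => B + A * Complex.exp ((r - s) * x) := by
      funext x
      have : g x = B * Complex.exp (s * x) + A * Complex.exp (r * x) := by rw [hg]; ring
      rw [this, hexpand]
    rwa [hcomm] at this
  have hd : s - r ≠ 0 := sub_ne_zero.mpr (Ne.symm hrs)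
  rcases lt_trichotomy (s - r).re 0 with hlt | heq | hgt
  · -- B-term decays
    have hB0 : Tendsto (fun x : ℝ => B * Complex.exp ((s - r) * x)) atTop (nhds 0) :=
      exp_decay_aux _ hlt B
    have hA : Tendsto (fun _ : ℝ => A) atTop (nhds 0) := by
      have := h1.sub hB0
      simpa using this
    have hA0 : A = 0 := tendsto_nhds_unique tendsto_const_nhds hA
    refine ⟨hA0, ?_⟩
    have h2' : Tendsto (fun _ : ℝ => B) atTop (nhds 0) := by
      simpa [hA0] using h2
    exact tendsto_nhds_unique tendsto_const_nhds h2'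
  · -- purely oscillatory difference
    have hdim : (s - r).im ≠ 0 := by
      intro h0
      exact hd (Complex.ext heq h0)
    set d : ℂ := s - r with hdd
    set cc : ℝ := Real.pi / d.im with hcc
    have hshift : Tendsto (fun x : ℝ => A + B * Complex.exp (d * (x + cc))) atTop (nhds 0) := by
      have hmap : Tendsto (fun x : ℝ => x + cc) atTop atTop :=
        tendsto_atTop_add_const_right atTop cc tendsto_id
      have := h1.comp hmap
      have heqf : ((fun x : ℝ => A + B * Complex.exp (d * ↑x)) ∘ fun x => x + cc)
          = fun x : ℝ => A + B * Complex.exp (d * (↑x + ↑cc)) := by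
        funext x; simp [Function.comp]
      rwa [heqf] at this
    have hdc : Complex.exp (d * cc) = -1 := by
      have hdeq : d = (d.im : ℂ) * Complex.I := by
        apply Complex.ext <;> simp [heq]
      have : d * (cc:ℂ) = Real.pi * Complex.I := by
        rw [hdeq, hcc]
        push_cast
        have him : ((s - r).im : ℂ) ≠ 0 := by exact_mod_cast hdim
        field_simp
        ring_nf
        exact mul_inv_cancel₀ (by exact_mod_cast hdim)
      rw [this, Complex.exp_pi_mul_I]
    have hdiff : Tendsto (fun x : ℝ => (A + B * Complex.exp (d * x))
        - (A + B * Complex.exp (d * (x + cc)))) atTop (nhds 0) := by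
      simpa using h1.sub hshift
    have hval : ∀ x : ℝ, (A + B * Complex.exp (d * x))
        - (A + B * Complex.exp (d * (x + cc))) = 2 * B * Complex.exp (d * x) := by
      intro x
      have : Complex.exp (d * ((x:ℂ) + cc)) = Complex.exp (d * x) * Complex.exp (d * cc) := by
        rw [← Complex.exp_add]; ring_nf
      rw [this, hdc]
      push_cast
      ring
    have hnorm : ∀ x : ℝ, ‖(A + B * Complex.exp (d * x))
        - (A + B * Complex.exp (d * (x + cc)))‖ = 2 * ‖B‖ := by
      intro x
      rw [hval, norm_mul, norm_mul, Complex.norm_exp]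
      have hre : (d * (x:ℂ)).re = 0 := by simp [Complex.mul_re, heq]
      rw [hre]
      simp [mul_comm]
    have hBn : Tendsto (fun _ : ℝ => 2 * ‖B‖) atTop (nhds 0) := by
      have := hdiff.norm
      simp only [norm_zero] at this
      simpa only [hnorm] using this
    have hB0 : B = 0 := by
      have h20 : 2 * ‖B‖ = 0 := tendsto_nhds_unique tendsto_const_nhds hBn
      have : ‖B‖ = 0 := by linarith
      exact norm_eq_zero.mp this
    refine ⟨?_, hB0⟩
    have h1' : Tendsto (fun _ : ℝ => A) atTop (nhds 0) := by
      simpa [hB0] using h1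
    exact tendsto_nhds_unique tendsto_const_nhds h1'
  · -- A-term decays
    have hlt : (r - s).re < 0 := by
      have : (r - s).re = -((s - r).re) := by simp [Complex.sub_re]
      rw [this]; linarith
    have hA0 : Tendsto (fun x : ℝ => A * Complex.exp ((r - s) * x)) atTop (nhds 0) :=
      exp_decay_aux _ hlt A
    have hB : Tendsto (fun _ : ℝ => B) atTop (nhds 0) := by
      have := h2.sub hA0
      simpa using this
    have hB0 : B = 0 := tendsto_nhds_unique tendsto_const_nhds hB
    refine ⟨?_, hB0⟩
    have h1' : Tendsto (fun _ : ℝ => A) atTop (nhds 0) := by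
      simpa [hB0] using h1
    exact tendsto_nhds_unique tendsto_const_nhds h1'


lemma inj_aux (r s : ℂ) (h1 : r ≠ s) (h2 : r ≠ -s) (h3 : r ≠ -r) (h4 : s ≠ -s)
    (h5 : s ≠ -r) (h6 : -r ≠ -s) :
    Function.Injective (![r, s, -r, -s] : Fin 4 → ℂ) := by
  intro a b hab
  fin_cases a <;> fin_cases b <;>
    simp only [Matrix.cons_val', Matrix.cons_val_zero, Matrix.cons_val_one, Matrix.head_cons,
      Matrix.head_fin_const, Matrix.cons_val_fin_one, Matrix.cons_val_two, Matrix.tail_cons,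
      Matrix.cons_val_three, Fin.isValue] at hab <;>
    first
      | rfl
      | (exact absurd hab (by assumption))
      | (exact absurd hab.symm (by assumption))

/-- every `C⁴` solution of `f'''' = κ f` on `[0,∞)` that decays at infinity is a
combination of the two stable exponentials, with initial-value identities. -/
lemma rep_lemma (κ r s : ℂ) (hr4 : r ^ 4 = κ) (hs4 : s ^ 4 = κ)
    (hrr : r.re < 0) (hsr : s.re < 0) (hrs : r ≠ s) (hr2s2 : r ^ 2 ≠ s ^ 2)
    (f : ℝ → ℂ) (hf : ContDiff ℝ 4 f)
    (hode : ∀ x ≥ (0:ℝ), iteratedDeriv 4 f x = κ * f x)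
    (hdecay : Tendsto f atTop (nhds 0)) :
    ∃ A B : ℂ, (∀ x ≥ (0:ℝ), f x = A * Complex.exp (r * x) + B * Complex.exp (s * x))
      ∧ A + B = f 0
      ∧ A * r ^ 2 + B * s ^ 2 = iteratedDeriv 2 f 0
      ∧ A * r ^ 3 + B * s ^ 3 = iteratedDeriv 3 f 0 := by
  have hr0 : r ≠ 0 := fun h => by simp [h] at hrr
  have hs0 : s ≠ 0 := fun h => by simp [h] at hsr
  have hrns : r ≠ -s := fun h => hr2s2 (by rw [h]; ring)
  -- the four roots
  set rt : Fin 4 → ℂ := ![r, s, -r, -s] with hrt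
  have hroot : ∀ k, rt k ^ 4 = κ := by
    intro k
    fin_cases k <;> simp [hrt] <;>
      [exact hr4; exact hs4;
       (rw [show (-r) ^ 4 = r ^ 4 by ring]; exact hr4);
       (rw [show (-s) ^ 4 = s ^ 4 by ring]; exact hs4)]
  have hsnr : s ≠ -r := fun h => hr2s2 (Eq.symm (by rw [h]; ring))
  have hrnr : r ≠ -r := by
    intro h; apply hr0; linear_combination h / 2
  have hsns : s ≠ -s := by
    intro h; apply hs0; linear_combination h / 2
  have hnrs : -r ≠ -s := fun h => hrs (neg_injective h)
  have hinj : Function.Injective rt := by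
    rw [hrt]
    exact inj_aux r s hrs hrns hrnr hsns hsnr hnrs
  -- the Vandermonde matrix and the coefficients
  set M : Matrix (Fin 4) (Fin 4) ℂ := (Matrix.vandermonde rt)ᵀ with hM
  have hdet : M.det ≠ 0 := by
    rw [hM, Matrix.det_transpose]
    exact (Matrix.det_vandermonde_ne_zero_iff).mpr hinj
  set b : Fin 4 → ℂ := ![f 0, deriv f 0, iteratedDeriv 2 f 0, iteratedDeriv 3 f 0] with hb
  set Av : Fin 4 → ℂ := M⁻¹ *ᵥ b with hAv
  have hMA : M *ᵥ Av = b := by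
    rw [hAv, Matrix.mulVec_mulVec, Matrix.mul_nonsing_inv _ (isUnit_iff_ne_zero.mpr hdet),
      Matrix.one_mulVec]
  have hsum : ∀ j : Fin 4, (∑ k, rt k ^ (j : ℕ) * Av k) = b j := by
    intro j
    have := congrFun hMA j
    rw [← this]
    simp [Matrix.mulVec, dotProduct, hM, Matrix.vandermonde]
  -- the two vector solutions
  set u : ℝ → Fin 4 → ℂ := fun x i => iteratedDeriv (i : ℕ) f x with hu
  set w : ℝ → Fin 4 → ℂ := fun x i => ∑ k, Av k * rt k ^ (i : ℕ) * Complex.exp (rt k * x)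
    with hw
  set v : ℝ → (Fin 4 → ℂ) → (Fin 4 → ℂ) := fun _ y => ![y 1, y 2, y 3, κ * y 0] with hv
  -- Lipschitz bound
  set K : NNReal := 1 + ‖κ‖₊ with hK
  have hlip : ∀ t : ℝ, LipschitzWith K (v t) := by
    intro t
    apply LipschitzWith.of_dist_le_mul
    intro x y
    rw [dist_pi_le_iff (by positivity)]
    intro i
    have hcomp : ∀ j : Fin 4, dist (x j) (y j) ≤ dist x y := fun j => dist_le_pi_dist x y j
    have hK1 : (1 : ℝ) ≤ (K : ℝ) := by simp [hK]
    have hKκ : ‖κ‖ ≤ (K : ℝ) := by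
      simp only [hK]
      push_cast
      simp [norm_nonneg]
    fin_cases i
    · exact le_trans (hcomp 1) (le_mul_of_one_le_left dist_nonneg hK1)
    · exact le_trans (hcomp 2) (le_mul_of_one_le_left dist_nonneg hK1)
    · exact le_trans (hcomp 3) (le_mul_of_one_le_left dist_nonneg hK1)
    · show dist (κ * x 0) (κ * y 0) ≤ K * dist x y
      have hrw : dist (κ * x 0) (κ * y 0) = ‖κ‖ * dist (x 0) (y 0) := by
        rw [dist_eq_norm, dist_eq_norm, ← mul_sub, norm_mul]
      rw [hrw]
      exact mul_le_mul hKκ (hcomp 0) dist_nonneg (by positivity)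
  -- derivatives of `u`
  have hdiffit : ∀ n : ℕ, n < 4 → Differentiable ℝ (iteratedDeriv n f) := by
    intro n hn
    exact hf.differentiable_iteratedDeriv n (by exact_mod_cast hn)
  have hderu : ∀ t : ℝ, 0 ≤ t → HasDerivAt u (v t (u t)) t := by
    intro t ht
    rw [hasDerivAt_pi]
    intro i
    have hgen : ∀ n : ℕ, n < 4 → HasDerivAt (iteratedDeriv n f) (iteratedDeriv (n+1) f t) t := by
      intro n hn
      have := ((hdiffit n hn) t).hasDerivAt
      rwa [← iteratedDeriv_succ] at this
    fin_cases i
    · show HasDerivAt (fun x => iteratedDeriv 0 f x) (iteratedDeriv 1 f t) t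
      simpa [hu] using hgen 0 (by norm_num)
    · simpa [hu, hv] using hgen 1 (by norm_num)
    · simpa [hu, hv] using hgen 2 (by norm_num)
    · show HasDerivAt (fun x => iteratedDeriv 3 f x) (κ * iteratedDeriv 0 f t) t
      have := hgen 3 (by norm_num)
      rw [show (3+1) = 4 from rfl, hode t ht] at this
      simpa [hu] using this
  -- derivatives of `w`
  have hderw : ∀ (m : ℕ) (t : ℝ), HasDerivAt (fun x : ℝ => ∑ k, Av k * rt k ^ m * Complex.exp (rt k * x))
      (∑ k, Av k * rt k ^ (m+1) * Complex.exp (rt k * t)) t := by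
    intro m t
    apply HasDerivAt.fun_sum
    intro k _
    have h1 : HasDerivAt (fun x : ℝ => Complex.exp (rt k * x))
        (Complex.exp (rt k * t) * rt k) t := by
      have h0 : HasDerivAt (fun z : ℂ => Complex.exp (rt k * z))
          (Complex.exp (rt k * t) * rt k) (t : ℂ) := by
        simpa [mul_comm] using ((hasDerivAt_id (t:ℂ)).const_mul (rt k)).cexp
      exact h0.comp_ofReal
    have := h1.const_mul (Av k * rt k ^ m)
    convert this using 1
    · rfl
    · ring
  have hderw' : ∀ t : ℝ, HasDerivAt w (v t (w t)) t := by
    intro t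
    rw [hasDerivAt_pi]
    intro i
    fin_cases i
    · show HasDerivAt (fun x => w x 0) (w t 1) t
      simpa [hw] using hderw 0 t
    · show HasDerivAt (fun x => w x 1) (w t 2) t
      simpa [hw] using hderw 1 t
    · show HasDerivAt (fun x => w x 2) (w t 3) t
      simpa [hw] using hderw 2 t
    · show HasDerivAt (fun x => w x 3) (κ * w t 0) t
      have h4 : (∑ k, Av k * rt k ^ (3+1) * Complex.exp (rt k * t))
          = κ * w t 0 := by
        rw [hw]
        rw [Finset.mul_sum]
        apply Finset.sum_congr rfl
        intro k _
        rw [hroot k, show ((0 : Fin 4) : ℕ) = 0 from rfl, pow_zero]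
        ring
      have := hderw 3 t
      rw [h4] at this
      simpa [hw] using this
  -- initial values agree
  have hival : u 0 = w 0 := by
    funext i
    have hw0 : w 0 i = ∑ k, rt k ^ (i:ℕ) * Av k := by
      rw [hw]
      simp only [Complex.ofReal_zero, mul_zero, Complex.exp_zero, mul_one]
      exact Finset.sum_congr rfl fun k _ => by ring
    rw [hw0, hsum i, hu]
    fin_cases i <;> simp [hb, iteratedDeriv_one]
  -- uniqueness on [0, R]
  have hueq : ∀ x ≥ (0:ℝ), u x = w x := by
    intro x hx
    have hcontu : ContinuousOn u (Icc 0 x) := by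
      apply Continuous.continuousOn
      apply continuous_pi
      intro i
      exact hf.continuous_iteratedDeriv (i:ℕ) (by fin_cases i <;> norm_num)
    have hcontw : ContinuousOn w (Icc 0 x) := by
      apply Continuous.continuousOn
      apply continuous_pi
      intro i
      fin_cases i <;>
        exact continuous_finset_sum _ fun k _ => (continuous_const.mul
          ((Complex.continuous_exp.comp (continuous_const.mul Complex.continuous_ofReal))))
    have := ODE_solution_unique hlip hcontu
      (fun t ht => (hderu t ht.1).hasDerivWithinAt)
      hcontw (fun t ht => (hderw' t).hasDerivWithinAt) hival
    exact this ⟨hx, le_refl x⟩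
  have hfx : ∀ x ≥ (0:ℝ), f x = ∑ k, Av k * Complex.exp (rt k * x) := by
    intro x hx
    have := congrFun (hueq x hx) 0
    rw [hu, hw] at this
    simpa using this
  -- kill the unstable coefficients
  have hstable : Tendsto (fun x : ℝ => Av 2 * Complex.exp (-r * x) + Av 3 * Complex.exp (-s * x))
      atTop (nhds 0) := by
    have h1 := ((hdecay.sub (exp_decay_aux r hrr (Av 0))).sub (exp_decay_aux s hsr (Av 1)))
    have heq : ∀ x : ℝ, 0 ≤ x →
        f x - Av 0 * Complex.exp (r * x) - Av 1 * Complex.exp (s * x)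
        = Av 2 * Complex.exp (-r * x) + Av 3 * Complex.exp (-s * x) := by
      intro x hx
      rw [hfx x hx, Fin.sum_univ_four]
      simp [hrt]
      ring
    apply Tendsto.congr' _ (by simpa using h1)
    filter_upwards [eventually_ge_atTop (0:ℝ)] with x hx using (heq x hx)
  have hAv23 : Av 2 = 0 ∧ Av 3 = 0 := by
    apply decay_two (-r) (-s) (Av 2) (Av 3)
    · simpa using hrr
    · simpa using hsr
    · exact fun h => hrs (neg_injective h)
    · exact hstable
  refine ⟨Av 0, Av 1, ?_, ?_, ?_, ?_⟩
  · intro x hx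
    rw [hfx x hx, Fin.sum_univ_four, hAv23.1, hAv23.2]
    simp [hrt]
  · have h := hsum 0
    rw [Fin.sum_univ_four] at h
    simp only [hrt, hb, show ((0 : Fin 4) : ℕ) = 0 from rfl, pow_zero, one_mul,
      hAv23.1, hAv23.2, Matrix.cons_val_zero, Matrix.cons_val_one, Matrix.head_cons,
      Matrix.cons_val_two, Matrix.tail_cons, Matrix.cons_val_three, mul_zero, add_zero] at h
    linear_combination h
  · have h := hsum 2
    rw [Fin.sum_univ_four] at h
    simp only [hrt, hb, show ((2 : Fin 4) : ℕ) = 2 from rfl,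
      hAv23.1, hAv23.2, Matrix.cons_val_zero, Matrix.cons_val_one, Matrix.head_cons,
      Matrix.cons_val_two, Matrix.tail_cons, Matrix.cons_val_three, mul_zero, add_zero] at h
    linear_combination h
  · have h := hsum 3
    rw [Fin.sum_univ_four] at h
    simp only [hrt, hb, show ((3 : Fin 4) : ℕ) = 3 from rfl,
      hAv23.1, hAv23.2, Matrix.cons_val_zero, Matrix.cons_val_one, Matrix.head_cons,
      Matrix.cons_val_two, Matrix.tail_cons, Matrix.cons_val_three, mul_zero, add_zero] at h
    linear_combination h


/-- iterated derivatives commute with continuous linear maps. -/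
lemma iteratedDeriv_clm (L : (ℂ × ℂ) →L[ℝ] ℂ) (γ : ℝ → ℂ × ℂ) (hγ : ContDiff ℝ 4 γ) :
    ∀ n : ℕ, n ≤ 4 → ∀ x : ℝ, iteratedDeriv n (fun x => L (γ x)) x = L (iteratedDeriv n γ x) := by
  intro n
  induction n with
  | zero => intro _ x; simp
  | succ m ih =>
    intro hm x
    have hm' : m ≤ 4 := by omega
    have hfun : iteratedDeriv m (fun x => L (γ x)) = fun x => L (iteratedDeriv m γ x) :=
      funext fun x => ih hm' x
    rw [iteratedDeriv_succ, hfun, iteratedDeriv_succ]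
    have hd : DifferentiableAt ℝ (iteratedDeriv m γ) x :=
      (hγ.differentiable_iteratedDeriv m (by exact_mod_cast (by omega : m < 4))).differentiableAt
    have h1 : HasDerivAt (iteratedDeriv m γ) (deriv (iteratedDeriv m γ) x) x := hd.hasDerivAt
    have h2 : HasDerivAt (fun x => L (iteratedDeriv m γ x))
        (L (deriv (iteratedDeriv m γ) x)) x := L.hasFDerivAt.comp_hasDerivAt x h1
    exact h2.deriv

/-- any fourth root of a complex number with negative real part
has nonzero real part. -/
lemma root_re_ne (κ : ℂ) (hκ : κ.re < 0) (z : ℂ) (hz : z ^ 4 = κ) : z.re ≠ 0 := by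
  intro h0
  set b : ℝ := z.im with hbb
  have hzi : z = (b : ℂ) * Complex.I := by
    apply Complex.ext <;> simp [h0, hbb]
  have h4 : z ^ 4 = ((b : ℂ)) ^ 4 := by
    calc z ^ 4 = ((b : ℂ)) ^ 4 * (Complex.I ^ 2) ^ 2 := by rw [hzi]; ring
      _ = ((b : ℂ)) ^ 4 := by rw [Complex.I_sq]; ring
  have hre : κ.re = b ^ 4 := by
    rw [← hz, h4]
    simp [← Complex.ofReal_pow]
  nlinarith [sq_nonneg (b ^ 2), sq_nonneg b, hre]


/-- the Lopatinskii–Shapiro condition holds at `y = 0` for the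
linearized elastic system: every decaying solution of
`λγ + c⁻⁴ ∂_x⁴ γ = 0` with the stated boundary conditions vanishes. -/
theorem lopatinskii_shapiro
    (lam : ℂ) (hlam : 0 < lam.re) (c : ℝ) (hc : 0 < c)
    (ν₀ : ℝ × ℝ) (hν : ‖ν₀‖ = 1) (hν1 : ν₀.1 ≠ 0)
    (γ : ℝ → ℂ × ℂ) (hγ : ContDiff ℝ 4 γ)
    (hode : ∀ x ≥ (0:ℝ), lam • γ x + (((c:ℂ)) ^ 4)⁻¹ • iteratedDeriv 4 γ x = 0)
    (hbc1 : (γ 0).2 = 0)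
    (hbc2 : iteratedDeriv 2 γ 0 = 0)
    (hbc3 : (((iteratedDeriv 3 γ 0).1 * (ν₀.1 : ℂ)
        + (iteratedDeriv 3 γ 0).2 * (ν₀.2 : ℂ)) * (ν₀.1 : ℂ)) = 0)
    (hdecay : Tendsto (fun x => ‖γ x‖) atTop (nhds 0)) :
    ∀ x ≥ (0:ℝ), γ x = 0 := by
  classical
  set κ : ℂ := -(lam * (c:ℂ) ^ 4) with hκ
  have hc4 : ((c:ℂ)) ^ 4 ≠ 0 := pow_ne_zero _ (by exact_mod_cast hc.ne')
  have hκre : κ.re < 0 := by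
    have h1 : ((c:ℂ)) ^ 4 = ((c ^ 4 : ℝ) : ℂ) := by push_cast; ring
    have h2 : κ.re = -(lam.re * c ^ 4) := by
      rw [hκ]
      simp [Complex.mul_re, ← Complex.ofReal_pow]
    rw [h2]
    nlinarith [pow_pos hc 4]
  -- construction of the two stable roots
  obtain ⟨ρ, hρ⟩ := IsAlgClosed.exists_pow_nat_eq κ (n := 4) (by norm_num)
  have hρre := root_re_ne κ hκre ρ hρ
  set r : ℂ := if ρ.re < 0 then ρ else -ρ with hr
  have hr4 : r ^ 4 = κ := by
    rw [hr]
    split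
    · exact hρ
    · rw [show (-ρ) ^ 4 = ρ ^ 4 by ring]; exact hρ
  have hrre : r.re < 0 := by
    rw [hr]
    split
    · assumption
    · rename_i hn
      have : 0 < ρ.re := lt_of_le_of_ne (not_lt.mp hn) (Ne.symm hρre)
      simp only [Complex.neg_re]
      linarith
  set σ0 : ℂ := Complex.I * r with hσ0
  have hσ04 : σ0 ^ 4 = κ := by
    rw [hσ0]
    calc (Complex.I * r) ^ 4 = r ^ 4 * (Complex.I ^ 2) ^ 2 := by ring
      _ = κ := by rw [Complex.I_sq, hr4]; ring
  have hσ0re := root_re_ne κ hκre σ0 hσ04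
  set s : ℂ := if σ0.re < 0 then σ0 else -σ0 with hs
  have hs4 : s ^ 4 = κ := by
    rw [hs]
    split
    · exact hσ04
    · rw [show (-σ0) ^ 4 = σ0 ^ 4 by ring]; exact hσ04
  have hsre : s.re < 0 := by
    rw [hs]
    split
    · assumption
    · rename_i hn
      have : 0 < σ0.re := lt_of_le_of_ne (not_lt.mp hn) (Ne.symm hσ0re)
      simp only [Complex.neg_re]
      linarith
  have hr0 : r ≠ 0 := fun h => by simp [h] at hrre
  have hs0 : s ≠ 0 := fun h => by simp [h] at hsre
  have hsform : s = Complex.I * r ∨ s = -(Complex.I * r) := by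
    rw [hs, hσ0]
    split
    · exact Or.inl rfl
    · exact Or.inr rfl
  have hs2 : s ^ 2 = -(r ^ 2) := by
    rcases hsform with h | h
    · rw [h, mul_pow, Complex.I_sq]; ring
    · rw [h, show (-(Complex.I * r)) ^ 2 = (Complex.I * r) ^ 2 by ring, mul_pow,
        Complex.I_sq]; ring
  have hr2s2 : r ^ 2 ≠ s ^ 2 := by
    rw [hs2]
    intro h
    apply hr0
    have h2 : r ^ 2 = 0 := by linear_combination h / 2
    exact pow_eq_zero_iff (by norm_num) |>.mp h2
  have hrs : r ≠ s := fun h => hr2s2 (by rw [h])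
  have hsr' : s - r ≠ 0 := sub_ne_zero.mpr (Ne.symm hrs)
  -- the vector ODE in normalized form
  have hode' : ∀ x ≥ (0:ℝ), iteratedDeriv 4 γ x = κ • γ x := by
    intro x hx
    have h := hode x hx
    have h2 : (((c:ℂ)) ^ 4)⁻¹ • iteratedDeriv 4 γ x = -(lam • γ x) :=
      eq_neg_of_add_eq_zero_right h
    calc iteratedDeriv 4 γ x
        = ((c:ℂ) ^ 4) • ((((c:ℂ)) ^ 4)⁻¹ • iteratedDeriv 4 γ x) :=
          (smul_inv_smul₀ hc4 _).symm
      _ = ((c:ℂ) ^ 4) • (-(lam • γ x)) := by rw [h2]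
      _ = κ • γ x := by
          rw [smul_neg, smul_smul, ← neg_smul, hκ, mul_comm]
  -- components
  set f1 : ℝ → ℂ := fun x => (γ x).1 with hf1d
  set f2 : ℝ → ℂ := fun x => (γ x).2 with hf2d
  have hcont1 : ContDiff ℝ 4 f1 := (ContinuousLinearMap.fst ℝ ℂ ℂ).contDiff.comp hγ
  have hcont2 : ContDiff ℝ 4 f2 := (ContinuousLinearMap.snd ℝ ℂ ℂ).contDiff.comp hγ
  have hit1 : ∀ n : ℕ, n ≤ 4 → ∀ x : ℝ, iteratedDeriv n f1 x = (iteratedDeriv n γ x).1 := by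
    intro n hn x
    have := iteratedDeriv_clm (ContinuousLinearMap.fst ℝ ℂ ℂ) γ hγ n hn x
    simpa [ContinuousLinearMap.coe_fst', hf1d] using this
  have hit2 : ∀ n : ℕ, n ≤ 4 → ∀ x : ℝ, iteratedDeriv n f2 x = (iteratedDeriv n γ x).2 := by
    intro n hn x
    have := iteratedDeriv_clm (ContinuousLinearMap.snd ℝ ℂ ℂ) γ hγ n hn x
    simpa [ContinuousLinearMap.coe_snd', hf2d] using this
  have hode1 : ∀ x ≥ (0:ℝ), iteratedDeriv 4 f1 x = κ * f1 x := by
    intro x hx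
    rw [hit1 4 le_rfl x, hode' x hx]
    simp [hf1d]
  have hode2 : ∀ x ≥ (0:ℝ), iteratedDeriv 4 f2 x = κ * f2 x := by
    intro x hx
    rw [hit2 4 le_rfl x, hode' x hx]
    simp [hf2d]
  have hdec1 : Tendsto f1 atTop (nhds 0) := by
    rw [tendsto_zero_iff_norm_tendsto_zero]
    exact squeeze_zero (fun x => norm_nonneg _) (fun x => norm_fst_le (γ x)) hdecay
  have hdec2 : Tendsto f2 atTop (nhds 0) := by
    rw [tendsto_zero_iff_norm_tendsto_zero]
    exact squeeze_zero (fun x => norm_nonneg _) (fun x => norm_snd_le (γ x)) hdecay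
  -- second component vanishes
  obtain ⟨A2, B2, hrep2, hic20, hic22, hic23⟩ :=
    rep_lemma κ r s hr4 hs4 hrre hsre hrs hr2s2 f2 hcont2 hode2 hdec2
  have h20 : A2 + B2 = 0 := by rw [hic20]; exact hbc1
  have h22 : A2 * r ^ 2 + B2 * s ^ 2 = 0 := by
    rw [hic22, hit2 2 (by norm_num) 0, hbc2]
    rfl
  have hA2 : A2 = 0 := by
    have h3 : A2 * (r ^ 2 - s ^ 2) = 0 := by linear_combination h22 - s ^ 2 * h20
    rcases mul_eq_zero.mp h3 with h | h
    · exact h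
    · exact absurd (sub_eq_zero.mp h) hr2s2
  have hB2 : B2 = 0 := by linear_combination h20 - hA2
  have hf2zero : ∀ x ≥ (0:ℝ), f2 x = 0 := by
    intro x hx
    rw [hrep2 x hx, hA2, hB2]
    ring
  have h3γ2 : (iteratedDeriv 3 γ 0).2 = 0 := by
    rw [← hit2 3 (by norm_num) 0, ← hic23, hA2, hB2]
    ring
  -- first component third derivative vanishes at zero
  have hν1' : ((ν₀.1 : ℝ) : ℂ) ≠ 0 := by exact_mod_cast hν1
  have h3γ1 : (iteratedDeriv 3 γ 0).1 = 0 := by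
    have h := hbc3
    rw [h3γ2, zero_mul, add_zero] at h
    rcases mul_eq_zero.mp h with h' | h'
    · rcases mul_eq_zero.mp h' with h'' | h''
      · exact h''
      · exact absurd h'' hν1'
    · exact absurd h' hν1'
  -- first component vanishes
  obtain ⟨A1, B1, hrep1, hic10, hic12, hic13⟩ :=
    rep_lemma κ r s hr4 hs4 hrre hsre hrs hr2s2 f1 hcont1 hode1 hdec1
  have h12 : A1 * r ^ 2 + B1 * s ^ 2 = 0 := by
    rw [hic12, hit1 2 (by norm_num) 0, hbc2]
    rfl
  have h13 : A1 * r ^ 3 + B1 * s ^ 3 = 0 := by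
    rw [hic13, hit1 3 (by norm_num) 0, h3γ1]
  have hA1 : A1 = 0 := by
    have h3 : A1 * (r ^ 2 * (s - r)) = 0 := by linear_combination s * h12 - h13
    rcases mul_eq_zero.mp h3 with h | h
    · exact h
    · exact absurd h (mul_ne_zero (pow_ne_zero 2 hr0) hsr')
  have hB1 : B1 = 0 := by
    have h4 : B1 * s ^ 2 = 0 := by linear_combination h12 - r ^ 2 * hA1
    rcases mul_eq_zero.mp h4 with h | h
    · exact h
    · exact absurd h (pow_ne_zero 2 hs0)
  have hf1zero : ∀ x ≥ (0:ℝ), f1 x = 0 := by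
    intro x hx
    rw [hrep1 x hx, hA1, hB1]
    ring
  intro x hx
  have e1 : (γ x).1 = 0 := hf1zero x hx
  have e2 : (γ x).2 = 0 := hf2zero x hx
  exact Prod.ext_iff.mpr ⟨by simpa using e1, by simpa using e2⟩
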